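/- Let G be a connected reductive group with Borel B and maximal torus H, and λ ∈ H a regular semisimple element. The preimage of the G-conjugacy class 𝒪 of λ under the group Grothendieck–Springer map G ×^B B → G is a degree |W| covering of 𝒪, where W is the Weyl group. -/

import Mathlib

open Matrix Module
open scoped Classical

section Aux
variable {k : Type*} [Field k] {m : ℕ}

lemma single_eq_smul (j : Fin m) (c : k) : (Pi.single j c : Fin m → k) = c • (Pi.single j (1:k) : Fin m → k) := by
  rw [← Pi.single_smul, smul_eq_mul, mul_one]

/-- membership of a coordinate vector in a span of coordinate vectors -/
lemma single_mem_span_iff (S : Finset (Fin m)) (p : Fin m) :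
    Pi.single p (1:k) ∈ Submodule.span k ((fun i => Pi.single i (1:k)) '' S) ↔ p ∈ S := by
  constructor
  · intro h
    by_contra hp
    have hle : Submodule.span k ((fun i => Pi.single i (1:k)) '' S) ≤
        LinearMap.ker (LinearMap.proj (R := k) (φ := fun _ : Fin m => k) p) := by
      rw [Submodule.span_le]
      rintro _ ⟨q, hq, rfl⟩
      have : q ≠ p := by rintro rfl; exact hp hq
      have : (Pi.single q (1:k) : Fin m → k) p = 0 := Pi.single_eq_of_ne (Ne.symm this) 1
      simp [LinearMap.mem_ker, this]
    have := hle h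
    simp [LinearMap.mem_ker] at this
  · intro h
    exact Submodule.subset_span ⟨p, h, rfl⟩

lemma finrank_span_singles (S : Finset (Fin m)) :
    finrank k (Submodule.span k ((fun i => Pi.single i (1:k)) '' (S : Set (Fin m)))) = S.card := by
  classical
  have hli : LinearIndependent k (fun i : S => (Pi.single (i : Fin m) (1:k) : Fin m → k)) := by
    have := (Pi.basisFun k (Fin m)).linearIndependent
    have h2 := this.comp (Subtype.val : S → Fin m) Subtype.val_injective
    have he : (fun i : S => (Pi.single (i : Fin m) (1:k) : Fin m → k)) =
        (⇑(Pi.basisFun k (Fin m)) ∘ Subtype.val) := by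
      funext i; simp [Pi.basisFun_apply]
    rw [he]; exact h2
  have h := finrank_span_eq_card hli
  rw [Fintype.card_coe] at h
  rw [Set.image_eq_range]
  exact h

/-- key lemma: an invariant subspace under a regular diagonal matrix contains
the coordinate vectors of all nonzero coordinates of its elements -/
lemma key_single_mem (d : Fin m → k) (hd : Function.Injective d)
    (V : Submodule k (Fin m → k)) (hV : V.map (Matrix.toLin' (Matrix.diagonal d)) ≤ V) :
    ∀ (n : ℕ) (v : Fin m → k), (Finset.univ.filter fun j => v j ≠ 0).card ≤ n →
      v ∈ V → ∀ i, v i ≠ 0 → Pi.single i (1:k) ∈ V := by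
  classical
  intro n
  induction n with
  | zero =>
    intro v hc hv i hi
    exfalso
    have : i ∈ Finset.univ.filter fun j => v j ≠ 0 := by simp [hi]
    have := Finset.card_pos.mpr ⟨i, this⟩
    omega
  | succ n ih =>
    intro v hc hv i hi
    set w : Fin m → k := fun j => (d j - d i) * v j with hw
    have hwV : w ∈ V := by
      have h1 : Matrix.toLin' (Matrix.diagonal d) v ∈ V :=
        hV ⟨v, hv, rfl⟩
      have h2 : Matrix.toLin' (Matrix.diagonal d) v = fun j => d j * v j := by
        funext j
        simp [Matrix.toLin'_apply, Matrix.mulVec_diagonal]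
      have : w = Matrix.toLin' (Matrix.diagonal d) v - d i • v := by
        funext j; simp [hw, h2]; ring
      rw [this]
      exact V.sub_mem h1 (V.smul_mem _ hv)
    have hwc : (Finset.univ.filter fun j => w j ≠ 0).card ≤ n := by
      have hsub : (Finset.univ.filter fun j => w j ≠ 0) ⊆
          (Finset.univ.filter fun j => v j ≠ 0).erase i := by
        intro j hj
        simp only [Finset.mem_filter, Finset.mem_univ, true_and, hw] at hj
        have hji : j ≠ i := by rintro rfl; simp at hj
        have : v j ≠ 0 := fun h => hj (by simp [h])
        simp [Finset.mem_erase, hji, this]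
      have h1 := Finset.card_le_card hsub
      have h2 : ((Finset.univ.filter fun j => v j ≠ 0).erase i).card =
          (Finset.univ.filter fun j => v j ≠ 0).card - 1 :=
        Finset.card_erase_of_mem (by simp [hi])
      omega
    -- all singles for j ≠ i with v j ≠ 0 are in V
    have hsingles : ∀ j, j ≠ i → v j ≠ 0 → Pi.single j (1:k) ∈ V := by
      intro j hj hvj
      have hwj : w j ≠ 0 := by
        simp only [hw]
        exact mul_ne_zero (sub_ne_zero.mpr fun h => hj (hd h)) hvj
      exact ih w hwc hwV j hwj
    -- v i • single i = v - ∑_{j ≠ i} single j (v j)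
    have hsum : (∑ j ∈ Finset.univ.erase i, Pi.single j (v j)) ∈ V := by
      apply Submodule.sum_mem
      intro j hj
      rcases eq_or_ne (v j) 0 with h | h
      · simp [h]
      · rw [single_eq_smul]
        exact V.smul_mem _ (hsingles j (Finset.ne_of_mem_erase hj) h)
    have hvi : (Pi.single i (v i) : Fin m → k) = v - ∑ j ∈ Finset.univ.erase i, Pi.single j (v j) := by
      have := Finset.univ_sum_single v
      rw [← Finset.add_sum_erase _ _ (Finset.mem_univ i)] at this
      rw [eq_sub_iff_add_eq, this]
    have h3 : Pi.single i (v i) ∈ V := by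
      rw [hvi]; exact V.sub_mem hv hsum
    have h4 : (Pi.single i (1:k) : Fin m → k) = (v i)⁻¹ • (Pi.single i (v i) : Fin m → k) := by
      rw [single_eq_smul i (v i), smul_smul, inv_mul_cancel₀ hi, one_smul]
    rw [h4]
    exact V.smul_mem _ h3

lemma invariant_eq_span (d : Fin m → k) (hd : Function.Injective d)
    (V : Submodule k (Fin m → k)) (hV : V.map (Matrix.toLin' (Matrix.diagonal d)) ≤ V) :
    V = Submodule.span k ((fun i => Pi.single i (1:k)) ''
      ↑(Finset.univ.filter fun p => Pi.single p (1:k) ∈ V)) := by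
  classical
  apply le_antisymm
  · intro v hv
    have hv' : v = ∑ j : Fin m, Pi.single j (v j) := (Finset.univ_sum_single v).symm
    rw [hv']
    apply Submodule.sum_mem
    intro j _
    rcases eq_or_ne (v j) 0 with h | h
    · simp [h]
    · have hj : Pi.single j (1:k) ∈ V := key_single_mem d hd V hV _ v le_rfl hv j h
      rw [single_eq_smul]
      exact Submodule.smul_mem _ _ (Submodule.subset_span ⟨j, by simp [hj], rfl⟩)
  · rw [Submodule.span_le]
    rintro _ ⟨p, hp, rfl⟩
    simp only [Finset.coe_filter, Set.mem_setOf_eq, Finset.mem_univ, true_and] at hp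
    exact hp
end Aux

section Main
variable {k : Type*} [Field k] {m : ℕ}

/-- initial segments of `Fin m` -/
def flt (m : ℕ) (c : ℕ) : Finset (Fin m) := Finset.univ.filter fun j => (j : ℕ) < c

lemma flt_succ (j : Fin m) : flt m ((j : ℕ) + 1) = insert j (flt m (j : ℕ)) := by
  ext a
  simp only [flt, Finset.mem_filter, Finset.mem_univ, true_and, Finset.mem_insert, Fin.ext_iff]
  omega

lemma flt_card (c : ℕ) (hc : c ≤ m) : (flt m c).card = c := by
  induction c with
  | zero => simp [flt]
  | succ n ih =>
    have hn : n < m := by omega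
    have h1 : flt m (n + 1) = insert (⟨n, hn⟩ : Fin m) (flt m n) := flt_succ ⟨n, hn⟩
    have h2 : (⟨n, hn⟩ : Fin m) ∉ flt m n := by simp [flt]
    rw [h1, Finset.card_insert_of_notMem h2, ih (by omega)]

lemma flt_mono {c c' : ℕ} (h : c ≤ c') : flt m c ⊆ flt m c' := by
  intro a; simp only [flt, Finset.mem_filter, Finset.mem_univ, true_and]; omega

lemma diag_single (d : Fin m → k) (p : Fin m) :
    Matrix.toLin' (Matrix.diagonal d) (Pi.single p (1:k)) = d p • (Pi.single p (1:k) : Fin m → k) := by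
  funext j
  simp only [Matrix.toLin'_apply, Matrix.mulVec_diagonal, Pi.smul_apply, smul_eq_mul,
    Pi.single_apply]
  by_cases h : j = p <;> simp [h]

lemma span_singles_invariant (d : Fin m → k) (S : Finset (Fin m)) :
    (Submodule.span k ((fun p => Pi.single p (1:k)) '' (S : Set (Fin m)))).map
      (Matrix.toLin' (Matrix.diagonal d)) ≤
    Submodule.span k ((fun p => Pi.single p (1:k)) '' (S : Set (Fin m))) := by
  rw [Submodule.map_span, Submodule.span_le]
  rintro _ ⟨_, ⟨p, hp, rfl⟩, rfl⟩
  rw [diag_single]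
  exact Submodule.smul_mem _ _ (Submodule.subset_span ⟨p, hp, rfl⟩)

theorem diag_card (d : Fin m → k) (hd : Function.Injective d) :
    Nat.card (Equiv.Perm (Fin m)) =
    Nat.card {F : Fin (m + 1) → Submodule k (Fin m → k) //
        Monotone F ∧ (∀ i, Module.finrank k (F i) = (i : ℕ)) ∧
        ∀ i, (F i).map (Matrix.toLin' (Matrix.diagonal d)) ≤ F i} := by
  classical
  set sgl : Fin m → (Fin m → k) := fun p => Pi.single p 1 with hsgl
  -- the candidate map
  refine Nat.card_eq_of_bijective (fun σ =>
    ⟨fun i => Submodule.span k (sgl '' ((flt m (i : ℕ)).image σ : Set (Fin m))), ?_, ?_, ?_⟩) ⟨?_, ?_⟩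
  · -- monotone
    intro i i' h
    exact Submodule.span_mono (Set.image_mono (by
      exact_mod_cast Finset.image_subset_image (flt_mono (by exact_mod_cast h))))
  · -- finrank
    intro i
    rw [finrank_span_singles, Finset.card_image_of_injective _ σ.injective,
      flt_card _ (by omega)]
  · -- invariance
    intro i
    exact span_singles_invariant d _
  · -- injective
    intro σ τ h
    simp only [Subtype.mk.injEq] at h
    have hT : ∀ i : Fin (m + 1), (flt m (i : ℕ)).image σ = (flt m (i : ℕ)).image τ := by
      intro i
      ext p
      have h1 := congrFun h i
      constructor
      · intro hp
        have : sgl p ∈ Submodule.span k (sgl '' ((flt m (i : ℕ)).image σ : Set (Fin m))) :=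
          Submodule.subset_span ⟨p, by exact_mod_cast hp, rfl⟩
        rw [h1] at this
        exact_mod_cast (single_mem_span_iff _ p).mp this
      · intro hp
        have : sgl p ∈ Submodule.span k (sgl '' ((flt m (i : ℕ)).image τ : Set (Fin m))) :=
          Submodule.subset_span ⟨p, by exact_mod_cast hp, rfl⟩
        rw [← h1] at this
        exact_mod_cast (single_mem_span_iff _ p).mp this
    apply Equiv.ext
    intro j
    have h1 := hT j.succ
    have h2 := hT j.castSucc
    rw [Fin.coe_castSucc] at h2
    rw [Fin.val_succ, flt_succ, Finset.image_insert, Finset.image_insert] at h1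
    have hA : σ j ∉ (flt m (j:ℕ)).image σ := by
      simp only [Finset.mem_image]
      rintro ⟨b, hb, hee⟩
      obtain rfl := σ.injective hee
      simp [flt] at hb
    have hmem : σ j ∈ insert (τ j) ((flt m (j:ℕ)).image τ) :=
      h1 ▸ Finset.mem_insert_self _ _
    rcases Finset.mem_insert.mp hmem with h | h
    · exact h
    · rw [← h2] at h; exact absurd h hA
  · -- surjective
    rintro ⟨F, hmono, hrank, hinv⟩
    set S : Fin (m+1) → Finset (Fin m) := fun i => Finset.univ.filter fun p => sgl p ∈ F i with hS
    have hFS : ∀ i, F i = Submodule.span k (sgl '' (S i : Set (Fin m))) := fun i =>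
      invariant_eq_span d hd (F i) (hinv i)
    have hcard : ∀ i, (S i).card = (i:ℕ) := by
      intro i
      have h := hrank i
      rw [hFS i, finrank_span_singles] at h
      exact h
    have hSmono : ∀ {i i' : Fin (m+1)}, i ≤ i' → S i ⊆ S i' := by
      intro i i' h p hp
      simp only [hS, Finset.mem_filter, Finset.mem_univ, true_and] at hp ⊢
      exact hmono h hp
    have hsub : ∀ j : Fin m, S j.castSucc ⊆ S j.succ := fun j => hSmono (Fin.castSucc_le_succ j)
    have hone : ∀ j : Fin m, (S j.succ \ S j.castSucc).card = 1 := by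
      intro j
      rw [Finset.card_sdiff_of_subset (hsub j), hcard, hcard, Fin.val_succ, Fin.coe_castSucc]
      omega
    choose a ha using fun j => Finset.card_eq_one.mp (hone j)
    have haS : ∀ j, a j ∈ S j.succ ∧ a j ∉ S j.castSucc := by
      intro j
      have hmem : a j ∈ S j.succ \ S j.castSucc := (ha j) ▸ Finset.mem_singleton_self _
      exact Finset.mem_sdiff.mp hmem
    have hlt_aux : ∀ {j j' : Fin m}, (j:ℕ) < (j':ℕ) → a j ≠ a j' := by
      intro j j' hlt heq
      have h1 : a j ∈ S j'.castSucc := by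
        apply hSmono (i := j.succ) _ (haS j).1
        rw [Fin.le_def, Fin.val_succ, Fin.coe_castSucc]
        omega
      rw [heq] at h1
      exact (haS j').2 h1
    have hainj : Function.Injective a := by
      intro j j' h
      by_contra hne
      have hne' : (j:ℕ) ≠ (j':ℕ) := fun hh => hne (Fin.ext hh)
      rcases lt_or_gt_of_ne hne' with hlt | hlt
      · exact hlt_aux hlt h
      · exact hlt_aux hlt h.symm
    have hbij := Finite.injective_iff_bijective.mp hainj
    have hkey : ∀ i : Fin (m+1), (flt m (i:ℕ)).image a = S i := by
      intro i
      induction i using Fin.induction with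
      | zero =>
        have h0 : flt m ((0 : Fin (m+1)):ℕ) = ∅ := by
          ext b; simp [flt]
        rw [h0, Finset.image_empty]
        exact (Finset.card_eq_zero.mp (by simpa using hcard 0)).symm
      | succ j ih =>
        rw [Fin.coe_castSucc] at ih
        rw [Fin.val_succ, flt_succ j, Finset.image_insert, ih]
        apply Finset.eq_of_subset_of_card_le
        · intro b hb
          rcases Finset.mem_insert.mp hb with rfl | hb
          · exact (haS j).1
          · exact hsub j hb
        · rw [Finset.card_insert_of_notMem (haS j).2, hcard, hcard, Fin.val_succ,
            Fin.coe_castSucc]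
    refine ⟨Equiv.ofBijective a hbij, ?_⟩
    apply Subtype.ext
    funext i
    show Submodule.span k (sgl '' ((flt m (i : ℕ)).image (Equiv.ofBijective a hbij) : Set (Fin m))) = F i
    have hco : ⇑(Equiv.ofBijective a hbij) = a := rfl
    rw [hco, hkey i, ← hFS i]
end Main

section Conj
variable {k : Type*} [Field k] {m : ℕ}

theorem flag_card_conj (A : Matrix (Fin m) (Fin m) k) (u : (Matrix (Fin m) (Fin m) k)ˣ) :
    Nat.card {F : Fin (m + 1) → Submodule k (Fin m → k) //
        Monotone F ∧ (∀ i, Module.finrank k (F i) = (i : ℕ)) ∧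
        ∀ i, (F i).map (Matrix.toLin'
          ((u : Matrix (Fin m) (Fin m) k) * A * (↑u⁻¹ : Matrix (Fin m) (Fin m) k))) ≤ F i} =
    Nat.card {F : Fin (m + 1) → Submodule k (Fin m → k) //
        Monotone F ∧ (∀ i, Module.finrank k (F i) = (i : ℕ)) ∧
        ∀ i, (F i).map (Matrix.toLin' A) ≤ F i} := by
  set X : Matrix (Fin m) (Fin m) k := (u : Matrix (Fin m) (Fin m) k) * A * (↑u⁻¹ : Matrix (Fin m) (Fin m) k) with hX
  let e : (Fin m → k) ≃ₗ[k] (Fin m → k) :=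
    LinearEquiv.ofLinear (Matrix.toLin' (u : Matrix (Fin m) (Fin m) k))
      (Matrix.toLin' (↑u⁻¹ : Matrix (Fin m) (Fin m) k))
      (by rw [← Matrix.toLin'_mul, Units.mul_inv, Matrix.toLin'_one])
      (by rw [← Matrix.toLin'_mul, Units.inv_mul, Matrix.toLin'_one])
  have he1 : e.toLinearMap = Matrix.toLin' (u : Matrix (Fin m) (Fin m) k) := rfl
  have he2 : e.symm.toLinearMap = Matrix.toLin' (↑u⁻¹ : Matrix (Fin m) (Fin m) k) := rfl
  have hAu : A * (↑u⁻¹ : Matrix (Fin m) (Fin m) k) = (↑u⁻¹ : Matrix (Fin m) (Fin m) k) * X := by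
    rw [hX, ← Matrix.mul_assoc, ← Matrix.mul_assoc, Units.inv_mul, Matrix.one_mul]
  have hXu : X * (u : Matrix (Fin m) (Fin m) k) = (↑u : Matrix (Fin m) (Fin m) k) * A := by
    rw [hX, Matrix.mul_assoc, Units.inv_mul, Matrix.mul_one]
  apply Nat.card_congr
  refine
    { toFun := fun F => ⟨fun i => (F.1 i).map e.symm.toLinearMap, ?_, ?_, ?_⟩
      invFun := fun G => ⟨fun i => (G.1 i).map e.toLinearMap, ?_, ?_, ?_⟩
      left_inv := ?_, right_inv := ?_ }
  · exact fun i i' h => Submodule.map_mono (F.2.1 h)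
  · intro i
    rw [LinearEquiv.finrank_map_eq e.symm (F.1 i)]
    exact F.2.2.1 i
  · intro i
    obtain ⟨_, _, hinv⟩ := F.2
    rw [he2, ← Submodule.map_comp, ← Matrix.toLin'_mul, hAu, Matrix.toLin'_mul,
      Submodule.map_comp]
    exact Submodule.map_mono (hinv i)
  · exact fun i i' h => Submodule.map_mono (G.2.1 h)
  · intro i
    rw [LinearEquiv.finrank_map_eq e (G.1 i)]
    exact G.2.2.1 i
  · intro i
    obtain ⟨_, _, hinv⟩ := G.2
    rw [he1, ← Submodule.map_comp, ← Matrix.toLin'_mul, hXu, Matrix.toLin'_mul,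
      Submodule.map_comp]
    exact Submodule.map_mono (hinv i)
  · intro F
    apply Subtype.ext
    funext i
    show ((F.1 i).map e.symm.toLinearMap).map e.toLinearMap = F.1 i
    rw [← Submodule.map_comp]
    simp
  · intro G
    apply Subtype.ext
    funext i
    show ((G.1 i).map e.toLinearMap).map e.symm.toLinearMap = G.1 i
    rw [← Submodule.map_comp]
    simp

end Conj



/-- (For `G = GL_m` with diagonal torus `H`, Weyl group `W ≅ S_m`.)  Let
`λ = diagonal d ∈ H` be regular semisimple (`d` injective with nonzero entries, i.e. the
centralizer of `λ` in `G` is `H`).  The preimage of the conjugacy class `𝒪` of `λ` under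
the group Grothendieck–Springer map `G ×^B B → G` is a degree `|W|` covering of `𝒪`: the
fiber over any `x ∈ 𝒪` — the set of Borel subgroups (equivalently, complete invariant
flags) containing `x` — has exactly `|W|` points. -/
theorem stmt11 {k : Type*} [Field k] {m : ℕ}
    (d : Fin m → k) (hd : Function.Injective d) (hd0 : ∀ i, d i ≠ 0)
    (x : Matrix (Fin m) (Fin m) k)
    (hx : ∃ u : (Matrix (Fin m) (Fin m) k)ˣ,
      x = (u : Matrix (Fin m) (Fin m) k) * Matrix.diagonal d * (↑u⁻¹ : Matrix (Fin m) (Fin m) k)) :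
    Nat.card {F : Fin (m + 1) → Submodule k (Fin m → k) //
        Monotone F ∧ (∀ i, Module.finrank k (F i) = (i : ℕ)) ∧
        ∀ i, (F i).map (Matrix.toLin' x) ≤ F i} =
      Nat.card (Equiv.Perm (Fin m)) := by
  obtain ⟨u, rfl⟩ := hx
  rw [flag_card_conj (Matrix.diagonal d) u]
  exact (diag_card d hd).symm
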